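/- (Tower lifting) Let α and β be complex numbers of modulus 1 with α ≠ ±1 and β ≠ ±1, and suppose β^m = α or β^m = α⁻¹ for a positive integer m. Set a = Re α and b = Re β, and assume b is constructible over the subfield ℚ(a) of ℝ generated by a. Then there exist k ∈ ℕ and a chain of subfields G₀ ⊆ G₁ ⊆ … ⊆ G_k of ℂ such that G₀ is the subfield ℚ(α) of ℂ generated by α, β ∈ G_k, and for each i < k there is a complex number x with x² ∈ G_i and G_{i+1} equal to the subfield generated by G_i together with x (each step a quadratic extension). -/

import Mathlib

/-- A real number `b` is constructible over a subfield `F` of `ℝ` if there is a finite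
chain of subfields `F = F₀ ⊆ F₁ ⊆ … ⊆ F_k` of `ℝ` with `b ∈ F_k`, each step obtained by
adjoining a square root of an element of the previous field. -/
def IsConstructibleOver (F : Subfield ℝ) (b : ℝ) : Prop :=
  ∃ (k : ℕ) (Fs : ℕ → Subfield ℝ), Fs 0 = F ∧ b ∈ Fs k ∧
    ∀ i < k, ∃ x : ℝ, x ^ 2 ∈ Fs i ∧ Fs (i + 1) = Subfield.closure (↑(Fs i) ∪ {x})

/-- Map of a closure is closure of the image, for subfields. -/
lemma Subfield.map_closure' {K L : Type*} [DivisionRing K] [DivisionRing L]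
    (f : K →+* L) (s : Set K) :
    (Subfield.closure s).map f = Subfield.closure (f '' s) := by
  apply le_antisymm
  · rw [Subfield.map_le_iff_le_comap, Subfield.closure_le]
    intro x hx
    exact Subfield.subset_closure ⟨x, hx, rfl⟩
  · rw [Subfield.closure_le]
    rintro _ ⟨x, hx, rfl⟩
    exact ⟨x, Subfield.subset_closure hx, rfl⟩

lemma closure_coe_union {L : Type*} [DivisionRing L] (K : Subfield L) (t : Set L) :
    Subfield.closure (↑K ∪ t) = K ⊔ Subfield.closure t := by
  rw [Subfield.closure_union, Subfield.closure_eq]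

/-- **Tower lifting.** Let `α`, `β` be complex numbers of modulus 1, both
different from `±1`, with `β ^ m = α` or `β ^ m = α⁻¹` for a positive integer `m`.  Set
`a = Re α`, `b = Re β`, and assume `b` is constructible over the subfield `ℚ(a)` of `ℝ`
generated by `a`.  Then there is a tower of quadratic extensions of subfields of `ℂ`
starting at `ℚ(α)` whose top contains `β`. -/
theorem tower_lifting (m : ℕ) (hm : 0 < m) (α β : ℂ)
    (hα : ‖α‖ = 1) (hβ : ‖β‖ = 1)
    (hα1 : α ≠ 1) (hα1' : α ≠ -1) (hβ1 : β ≠ 1) (hβ1' : β ≠ -1)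
    (hpow : β ^ m = α ∨ β ^ m = α⁻¹)
    (hb : IsConstructibleOver (Subfield.closure {α.re}) β.re) :
    ∃ (k : ℕ) (Gs : ℕ → Subfield ℂ), Gs 0 = Subfield.closure ({α} : Set ℂ) ∧
      β ∈ Gs k ∧
      ∀ i < k, ∃ x : ℂ, x ^ 2 ∈ Gs i ∧ Gs (i + 1) = Subfield.closure (↑(Gs i) ∪ {x}) := by
  obtain ⟨k, Fs, hF0, hbk, hstep⟩ := hb
  set f : ℝ →+* ℂ := Complex.ofRealHom with hf
  set y : ℂ := β - (β.re : ℂ) with hy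
  -- the lifted tower
  set Gs : ℕ → Subfield ℂ := fun i =>
    if i ≤ k then Subfield.closure ({α} ∪ f '' (Fs i : Set ℝ))
    else Subfield.closure (({α} ∪ f '' (Fs k : Set ℝ)) ∪ {y}) with hGs
  refine ⟨k + 1, Gs, ?_, ?_, ?_⟩
  · -- base: Gs 0 = ℚ(α)
    have h0 : (0 : ℕ) ≤ k := Nat.zero_le _
    simp only [hGs, if_pos h0, hF0]
    apply le_antisymm
    · rw [Subfield.closure_le, Set.union_subset_iff]
      constructor
      · exact Set.singleton_subset_iff.2 (Subfield.subset_closure rfl)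
      · rintro _ ⟨x, hx, rfl⟩
        -- x ∈ closure {α.re}, show f x ∈ closure {α}
        have hmem : (α.re : ℂ) ∈ Subfield.closure ({α} : Set ℂ) := by
          have hαm : α ∈ Subfield.closure ({α} : Set ℂ) := Subfield.subset_closure rfl
          have : (α.re : ℂ) = (α + α⁻¹) / 2 := by
            rw [Complex.inv_eq_conj hα, Complex.re_eq_add_conj]
          rw [this]
          have h2 : (2 : ℂ) ∈ Subfield.closure ({α} : Set ℂ) := by
            exact_mod_cast natCast_mem (Subfield.closure ({α} : Set ℂ)) 2
          exact Subfield.div_mem _ (Subfield.add_mem _ hαm (Subfield.inv_mem _ hαm)) h2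
        have : Subfield.closure ({α.re} : Set ℝ) ≤
            (Subfield.closure ({α} : Set ℂ)).comap f := by
          rw [Subfield.closure_le]
          exact Set.singleton_subset_iff.2 hmem
        exact this hx
    · exact Subfield.closure_mono Set.subset_union_left
  · -- β ∈ Gs (k+1)
    have hk1 : ¬ (k + 1 ≤ k) := by omega
    simp only [hGs, if_neg hk1]
    have hyy : y ∈ Subfield.closure (({α} ∪ f '' (Fs k : Set ℝ)) ∪ {y}) :=
      Subfield.subset_closure (Set.mem_union_right _ rfl)
    have hbb : (β.re : ℂ) ∈ Subfield.closure (({α} ∪ f '' (Fs k : Set ℝ)) ∪ {y}) :=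
      Subfield.subset_closure (Set.mem_union_left _ (Set.mem_union_right _ ⟨β.re, hbk, rfl⟩))
    have : β = (β.re : ℂ) + y := by rw [hy]; ring
    rw [this]
    exact Subfield.add_mem _ hbb hyy
  · -- steps
    intro i hi
    rcases lt_or_eq_of_le (Nat.lt_succ_iff.mp hi) with hik | hik
    · -- i < k : real step lifted
      obtain ⟨x, hx2, hFsucc⟩ := hstep i hik
      refine ⟨(x : ℂ), ?_, ?_⟩
      · have : ((x : ℂ)) ^ 2 = f (x ^ 2) := by
          rw [hf, Complex.ofRealHom_eq_coe]; push_cast; ring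
        rw [hGs]
        simp only [if_pos (le_of_lt hik)]
        rw [this]
        exact Subfield.subset_closure (Set.mem_union_right _ ⟨x ^ 2, hx2, rfl⟩)
      · have h1 : i + 1 ≤ k := hik
        rw [hGs]
        simp only [if_pos (le_of_lt hik), if_pos h1, hFsucc]
        have himg : f '' ((Subfield.closure (↑(Fs i) ∪ {x}) : Subfield ℝ) : Set ℝ)
            = ((Subfield.closure (f '' (↑(Fs i) ∪ {x})) : Subfield ℂ) : Set ℂ) := by
          rw [← Subfield.map_closure', Subfield.coe_map]
        rw [himg, Set.image_union, closure_coe_union (Subfield.closure ({α} ∪ f '' ↑(Fs i)))]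
        rw [Set.union_comm ({α} : Set ℂ), closure_coe_union, ← Subfield.closure_union,
          ← Subfield.closure_union]
        congr 1
        ext z
        simp only [hf, Set.mem_union, Set.image_singleton, Set.mem_singleton_iff,
          Complex.ofRealHom_eq_coe]
        tauto
    · -- i = k : adjoin y
      subst hik
      refine ⟨y, ?_, ?_⟩
      · have hb' : (β.re : ℂ) ∈ Gs i := by
          rw [hGs]; simp only [le_refl, if_pos]
          exact Subfield.subset_closure (Set.mem_union_right _ ⟨β.re, hbk, rfl⟩)
        have hysq : y ^ 2 = (β.re : ℂ) ^ 2 - 1 := by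
          have him : β.im ^ 2 = 1 - β.re ^ 2 := by
            have := Complex.sq_norm β
            rw [hβ, Complex.normSq_apply] at this
            nlinarith [this]
          have : y = β.im * Complex.I := by
            rw [hy]
            rw [Complex.ext_iff]
            simp
          rw [this]
          have : ((β.im : ℂ)) ^ 2 = ((β.im ^ 2 : ℝ) : ℂ) := by push_cast; ring
          rw [mul_pow, Complex.I_sq, this, him]
          push_cast
          ring
        rw [hysq]
        exact Subfield.sub_mem _ (Subfield.pow_mem _ hb' 2) (Subfield.one_mem _)
      · rw [hGs]
        have hk1 : ¬ (i + 1 ≤ i) := by omega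
        simp only [le_refl, if_pos, if_neg hk1]
        rw [closure_coe_union, ← Subfield.closure_union]
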